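/- Let 0 < T ≤ 1, N ∈ ℕ with N ≥ 1, and 0 = s₀ < t₁ < s₁ < t₂ < ⋯ < s_N < t_{N+1} = T. Let h : ℝ → ℝ be continuous on [0,T], H(t) = ∫₀^t h(τ)dτ, H₀ = min_{t∈[0,T]} H(t), M₁ = max_{t∈[0,T]} e^{H(t)}. Let θ₁, θ₂ ∈ (1,2), A₁, a₂ > 0 and e_* = max(e^{−H₀θ₁/2}, e^{−H₀θ₂/2}). For i = 0,1,…,N let F̃ᵢ : ℝ × ℝ → ℝ be continuous with |F̃ᵢ(t,v)| ≤ (A₁/θ₁)|v|^{θ₁} for all t ∈ (sᵢ, t_{i+1}] and v ∈ ℝ, and for i = 1,…,N let Ĩᵢ : ℝ → ℝ be continuous with |Ĩᵢ(v)| ≤ a₂(|v|^{θ₂−1} + 1) for all v ∈ ℝ. Then for every u ∈ E_T, with ‖u‖_E = (∫₀^T e^{H(t)}|u''(t)|² dt)^{1/2}, one has ∑_{i=0}^N ∫_{sᵢ}^{t_{i+1}} e^{H(t)} F̃ᵢ(t, u(t)) dt ≤ M₁·A₁·T·e_*·‖u‖_E^{θ₁}, and ∑_{i=1}^N ∫₀^{u(tᵢ)}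 e^{H(tᵢ)} Ĩᵢ(s) ds ≤ N·M₁·a₂·((θ₂+1)/θ₂)·e_*·(‖u‖_E^{θ₂} + 1). -/

import Mathlib

open Set MeasureTheory Real

lemma aux_int {θ A : ℝ} (hθ : 1 < θ) {g : ℝ → ℝ} (hg : Continuous g)
    (hgb : ∀ s, |g s| ≤ A * (|s| ^ (θ - 1) + 1)) (v : ℝ) :
    ∫ s in (0:ℝ)..v, g s ≤ A * (|v| ^ θ / θ + |v|) := by
  have hθ0 : (0:ℝ) < θ := by linarith
  have hcontb : Continuous (fun s : ℝ => A * (|s| ^ (θ - 1) + 1)) := by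
    have : Continuous (fun s : ℝ => |s| ^ (θ - 1)) :=
      continuous_abs.rpow_const (fun x => Or.inr (by linarith))
    continuity
  have key : ∀ w : ℝ, 0 ≤ w →
      ∫ s in (0:ℝ)..w, A * (|s| ^ (θ - 1) + 1) = A * (w ^ θ / θ + w) := by
    intro w hw
    rw [intervalIntegral.integral_const_mul]
    congr 1
    have h1 : (∫ s in (0:ℝ)..w, (|s| ^ (θ - 1) + 1)) =
        (∫ s in (0:ℝ)..w, |s| ^ (θ - 1)) + ∫ s in (0:ℝ)..w, (1:ℝ) := by
      apply intervalIntegral.integral_add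
      · exact (Continuous.intervalIntegrable (by
          exact continuous_abs.rpow_const (fun x => Or.inr (by linarith))) _ _)
      · exact intervalIntegrable_const
    have h2 : (∫ s in (0:ℝ)..w, |s| ^ (θ - 1)) = ∫ s in (0:ℝ)..w, s ^ (θ - 1) := by
      apply intervalIntegral.integral_congr
      intro s hs
      rw [uIcc_of_le hw] at hs
      simp only [abs_of_nonneg hs.1]
    have h3 : (∫ s in (0:ℝ)..w, s ^ (θ - 1)) = w ^ θ / θ := by
      rw [integral_rpow (Or.inl (by linarith))]
      rw [sub_add_cancel]
      rw [Real.zero_rpow (ne_of_gt hθ0), sub_zero]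
    simp [h1, h2, h3]
  calc ∫ s in (0:ℝ)..v, g s ≤ |∫ s in (0:ℝ)..v, g s| := le_abs_self _
    _ ≤ ∫ s in uIoc 0 v, |g s| := by
        simpa using intervalIntegral.norm_integral_le_integral_norm_uIoc (f := g) (a := 0) (b := v) (μ := volume)
    _ ≤ ∫ s in uIoc 0 v, A * (|s| ^ (θ - 1) + 1) := by
        apply setIntegral_mono_on
        · exact (hg.abs.integrableOn_Ioc (μ := volume) (a := min 0 v) (b := max 0 v))
        · exact (hcontb.integrableOn_Ioc (μ := volume) (a := min 0 v) (b := max 0 v))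
        · exact measurableSet_uIoc
        · intro s _; exact hgb s
    _ = ∫ s in (0:ℝ)..|v|, A * (|s| ^ (θ - 1) + 1) := by
        rcases le_or_gt 0 v with hv | hv
        · rw [uIoc_of_le hv, abs_of_nonneg hv, intervalIntegral.integral_of_le hv]
        · have h1 : uIoc (0:ℝ) v = Ioc v 0 := by
            rw [uIoc, min_eq_right hv.le, max_eq_left hv.le]
          rw [h1, ← intervalIntegral.integral_of_le hv.le, abs_of_neg hv]
          have := intervalIntegral.integral_comp_neg (a := (0:ℝ)) (b := -v)
            (fun s => A * (|s| ^ (θ - 1) + 1))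
          simp only [abs_neg, neg_neg, neg_zero] at this
          exact this.symm
    _ = A * (|v| ^ θ / θ + |v|) := key _ (abs_nonneg v)

lemma aux_holder {T : ℝ} (hT : 0 < T) {f : ℝ → ℝ} (hf : ContinuousOn f (Icc 0 T)) :
    ∫ x in (0:ℝ)..T, |f x| ≤ Real.sqrt T * Real.sqrt (∫ x in (0:ℝ)..T, |f x| ^ 2) := by
  set μ := volume.restrict (Ioc (0:ℝ) T) with hμ
  haveI : Fact (volume (Ioc (0:ℝ) T) < ⊤) := ⟨by rw [Real.volume_Ioc]; exact ENNReal.ofReal_lt_top⟩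
  have hmeas : AEStronglyMeasurable f μ :=
    (hf.mono Ioc_subset_Icc_self).aestronglyMeasurable measurableSet_Ioc
  obtain ⟨C, hC⟩ := isCompact_Icc.exists_bound_of_continuousOn hf
  have hmem : MemLp (fun x => |f x|) (ENNReal.ofReal 2) μ := by
    apply MemLp.of_bound hmeas.norm C
    filter_upwards [ae_restrict_mem measurableSet_Ioc] with x hx
    simpa using hC x (Ioc_subset_Icc_self hx)
  have hone : MemLp (fun _ : ℝ => (1:ℝ)) (ENNReal.ofReal 2) μ := memLp_const 1
  have hpq : Real.HolderConjugate 2 2 := (Real.holderConjugate_iff_eq_conjExponent one_lt_two).2 (by norm_num)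
  have key := integral_mul_le_Lp_mul_Lq_of_nonneg hpq (μ := μ)
    (f := fun x => |f x|) (g := fun _ => (1:ℝ))
    (Filter.Eventually.of_forall fun x => abs_nonneg _)
    (Filter.Eventually.of_forall fun _ => zero_le_one) hmem hone
  simp only [mul_one, Real.one_rpow] at key
  have h1 : ∫ a, |f a| ∂μ = ∫ x in (0:ℝ)..T, |f x| := by
    rw [intervalIntegral.integral_of_le hT.le]
  have h2 : (∫ _a, (1:ℝ) ∂μ) = T := by
    simp [hμ, Real.volume_Ioc, ENNReal.toReal_ofReal hT.le, hT.le]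
  have h3 : (∫ a, |f a| ^ (2:ℝ) ∂μ) = ∫ x in (0:ℝ)..T, |f x| ^ 2 := by
    rw [intervalIntegral.integral_of_le hT.le]
    congr 1
    ext a
    rw [Real.rpow_two]
  rw [h1, h2, h3] at key
  calc ∫ x in (0:ℝ)..T, |f x| ≤ (∫ x in (0:ℝ)..T, |f x| ^ 2) ^ (1/(2:ℝ)) * T ^ (1/(2:ℝ)) := key
    _ = Real.sqrt T * Real.sqrt (∫ x in (0:ℝ)..T, |f x| ^ 2) := by
        rw [← Real.sqrt_eq_rpow, ← Real.sqrt_eq_rpow, mul_comm]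

set_option maxHeartbeats 1000000 in
theorem stmt9
    (T : ℝ) (hT0 : 0 < T) (hT1 : T ≤ 1)
    (N : ℕ) (hN : 1 ≤ N)
    (ss tt : ℕ → ℝ)
    (hs0 : ss 0 = 0) (htN : tt (N + 1) = T)
    (hst : ∀ i ≤ N, ss i < tt (i + 1))
    (hts : ∀ i, 1 ≤ i → i ≤ N → tt i < ss i)
    (h : ℝ → ℝ) (hh : ContinuousOn h (Icc 0 T))
    (H : ℝ → ℝ) (hH : ∀ t, H t = ∫ τ in (0:ℝ)..t, h τ)
    (H₀ : ℝ) (hH₀ : IsLeast (H '' Icc 0 T) H₀)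
    (M₁ : ℝ) (hM₁ : IsGreatest ((fun t => Real.exp (H t)) '' Icc 0 T) M₁)
    (θ₁ θ₂ A₁ a₂ : ℝ)
    (hθ₁ : 1 < θ₁) (hθ₁' : θ₁ < 2) (hθ₂ : 1 < θ₂) (hθ₂' : θ₂ < 2)
    (hA₁ : 0 < A₁) (ha₂ : 0 < a₂)
    (estar : ℝ)
    (hestar : estar = max (Real.exp (-(H₀ * θ₁) / 2)) (Real.exp (-(H₀ * θ₂) / 2)))
    (Ftilde : ℕ → ℝ → ℝ → ℝ)
    (hFt_cont : ∀ i ≤ N, Continuous (Function.uncurry (Ftilde i)))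
    (hFt_bound : ∀ i ≤ N, ∀ t ∈ Ioc (ss i) (tt (i + 1)), ∀ v : ℝ,
      |Ftilde i t v| ≤ (A₁ / θ₁) * |v| ^ θ₁)
    (Itilde : ℕ → ℝ → ℝ)
    (hIt_cont : ∀ i, 1 ≤ i → i ≤ N → Continuous (Itilde i))
    (hIt_bound : ∀ i, 1 ≤ i → i ≤ N → ∀ v : ℝ,
      |Itilde i v| ≤ a₂ * (|v| ^ (θ₂ - 1) + 1))
    (u u' u'' : ℝ → ℝ)
    (hu : ∀ t ∈ Icc (0:ℝ) T, HasDerivAt u (u' t) t)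
    (hu' : ∀ t ∈ Icc (0:ℝ) T, HasDerivAt u' (u'' t) t)
    (hu'' : ContinuousOn u'' (Icc 0 T))
    (hu0 : u 0 = 0) (huT : u T = 0) (hu'0 : u' 0 = 0) (hu'T : u' T = 0)
    (uE : ℝ) (huE : uE = Real.sqrt (∫ x in (0:ℝ)..T, Real.exp (H x) * |u'' x| ^ 2)) :
    (∑ i ∈ Finset.range (N + 1),
        ∫ x in (ss i)..(tt (i + 1)), Real.exp (H x) * Ftilde i x (u x))
      ≤ M₁ * A₁ * T * estar * uE ^ θ₁ ∧
    (∑ i ∈ Finset.Icc 1 N,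
        ∫ s in (0:ℝ)..(u (tt i)), Real.exp (H (tt i)) * Itilde i s)
      ≤ (N : ℝ) * M₁ * a₂ * ((θ₂ + 1) / θ₂) * estar * (uE ^ θ₂ + 1) := by
  -- continuity
  have hu_cont : ContinuousOn u (Icc 0 T) := fun t ht =>
    (hu t ht).continuousAt.continuousWithinAt
  have hu'_cont : ContinuousOn u' (Icc 0 T) := fun t ht =>
    (hu' t ht).continuousAt.continuousWithinAt
  have hH_cont : ContinuousOn H (Icc 0 T) := by
    have h1 : IntegrableOn h (uIcc 0 T) := by
      rw [uIcc_of_le hT0.le]; exact hh.integrableOn_Icc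
    have h2 := intervalIntegral.continuousOn_primitive_interval h1
    rw [uIcc_of_le hT0.le] at h2
    exact h2.congr (fun t _ => hH t)
  have hexpH_cont : ContinuousOn (fun t => Real.exp (H t)) (Icc 0 T) :=
    Real.continuous_exp.comp_continuousOn hH_cont
  -- basic positivity facts
  have hM₁pos : 0 < M₁ := by
    obtain ⟨t, _, ht2⟩ := hM₁.1
    exact ht2 ▸ Real.exp_pos _
  have hH00 : H 0 = 0 := by rw [hH]; simp
  have hH₀le : H₀ ≤ 0 := by
    have := hH₀.2 ⟨0, ⟨le_refl (0:ℝ), hT0.le⟩, rfl⟩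
    linarith [hH00 ▸ this]
  have hestar1 : (1:ℝ) ≤ estar := by
    rw [hestar]
    refine le_trans ?_ (le_max_left _ _)
    rw [← Real.exp_zero]
    apply Real.exp_le_exp.2
    nlinarith
  have hestar0 : (0:ℝ) ≤ estar := by linarith
  -- structural facts about the partition
  have hssnn : ∀ i ≤ N, 0 ≤ ss i := by
    intro i hi
    induction i with
    | zero => rw [hs0]
    | succ n ih =>
      have h1 : 0 ≤ ss n := ih (by omega)
      have h2 : ss n < tt (n+1) := hst n (by omega)
      have h3 : tt (n+1) < ss (n+1) := hts (n+1) (by omega) hi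
      linarith
  have httT : ∀ i ≤ N, tt (i+1) ≤ T := by
    intro i hi
    have key : ∀ m, m ≤ N → ∀ j, j ≤ m → tt (j+1) ≤ tt (m+1) := by
      intro m
      induction m with
      | zero => intro _ j hj; rw [Nat.le_zero.mp hj]
      | succ n ih =>
        intro hn j hj
        rcases Nat.eq_or_lt_of_le hj with h1 | h1
        · rw [h1]
        · have h2 : tt (j+1) ≤ tt (n+1) := ih (by omega) j (by omega)
          have h3 : tt (n+1) < ss (n+1) := hts (n+1) (by omega) (by omega)
          have h4 : ss (n+1) < tt (n+2) := hst (n+1) (by omega)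
          linarith
    rw [← htN]
    exact key N le_rfl i hi
  have hsub : ∀ i ≤ N, Icc (ss i) (tt (i+1)) ⊆ Icc 0 T :=
    fun i hi => Icc_subset_Icc (hssnn i hi) (httT i hi)
  -- the energy quantity
  set B := ∫ x in (0:ℝ)..T, Real.exp (H x) * |u'' x| ^ 2 with hB
  have hint : ∀ {f : ℝ → ℝ}, ContinuousOn f (Icc 0 T) → IntervalIntegrable f volume 0 T := by
    intro f hf
    apply ContinuousOn.intervalIntegrable
    rwa [uIcc_of_le hT0.le]
  have hBnonneg : 0 ≤ B :=
    intervalIntegral.integral_nonneg hT0.le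
      (fun x _ => mul_nonneg (Real.exp_pos _).le (sq_nonneg _))
  have huE0 : 0 ≤ uE := huE ▸ Real.sqrt_nonneg _
  have huE2 : uE ^ 2 = B := by rw [huE, sq_sqrt hBnonneg]
  -- FTC
  have hu'eq : ∀ s ∈ Icc (0:ℝ) T, u' s = ∫ x in (0:ℝ)..s, u'' x := by
    intro s hs
    have hsub2 : uIcc (0:ℝ) s ⊆ Icc 0 T := by
      rw [uIcc_of_le hs.1]; exact Icc_subset_Icc le_rfl hs.2
    have := intervalIntegral.integral_eq_sub_of_hasDerivAt
      (f := u') (f' := u'') (a := 0) (b := s)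
      (fun x hx => hu' x (hsub2 hx))
      ((hu''.mono hsub2).intervalIntegrable)
    rw [this, hu'0, sub_zero]
  have hueq : ∀ t ∈ Icc (0:ℝ) T, u t = ∫ x in (0:ℝ)..t, u' x := by
    intro t ht
    have hsub2 : uIcc (0:ℝ) t ⊆ Icc 0 T := by
      rw [uIcc_of_le ht.1]; exact Icc_subset_Icc le_rfl ht.2
    have := intervalIntegral.integral_eq_sub_of_hasDerivAt
      (f := u) (f' := u') (a := 0) (b := t)
      (fun x hx => hu x (hsub2 hx))
      ((hu'_cont.mono hsub2).intervalIntegrable)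
    rw [this, hu0, sub_zero]
  -- pointwise bounds
  set C₀ := ∫ x in (0:ℝ)..T, |u'' x| with hC₀def
  have hC₀nn : 0 ≤ C₀ :=
    intervalIntegral.integral_nonneg hT0.le (fun x _ => abs_nonneg _)
  have hu'le : ∀ s ∈ Icc (0:ℝ) T, |u' s| ≤ C₀ := by
    intro s hs
    rw [hu'eq s hs]
    calc |∫ x in (0:ℝ)..s, u'' x| ≤ ∫ x in (0:ℝ)..s, |u'' x| := by
          apply intervalIntegral.abs_integral_le_integral_abs hs.1
      _ ≤ C₀ := by
          rw [hC₀def, ← intervalIntegral.integral_add_adjacent_intervals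
            (a := (0:ℝ)) (b := s) (c := T)]
          · have : 0 ≤ ∫ x in s..T, |u'' x| :=
              intervalIntegral.integral_nonneg hs.2 (fun x _ => abs_nonneg _)
            linarith
          · exact ((hu''.mono (by rw [uIcc_of_le hs.1]; exact Icc_subset_Icc le_rfl hs.2)).abs).intervalIntegrable
          · exact ((hu''.mono (by rw [uIcc_of_le hs.2]; exact Icc_subset_Icc hs.1 le_rfl)).abs).intervalIntegrable
  have hule : ∀ t ∈ Icc (0:ℝ) T, |u t| ≤ C₀ := by
    intro t ht
    rw [hueq t ht]
    have hsub2 : uIcc (0:ℝ) t ⊆ Icc 0 T := by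
      rw [uIcc_of_le ht.1]; exact Icc_subset_Icc le_rfl ht.2
    calc |∫ x in (0:ℝ)..t, u' x| ≤ ∫ x in (0:ℝ)..t, |u' x| :=
          intervalIntegral.abs_integral_le_integral_abs ht.1
      _ ≤ ∫ _x in (0:ℝ)..t, C₀ := by
          apply intervalIntegral.integral_mono_on ht.1
          · exact ((hu'_cont.mono hsub2).abs).intervalIntegrable
          · exact intervalIntegrable_const
          · intro x hx
            exact hu'le x (hsub2 (by rw [uIcc_of_le ht.1]; exact hx))
      _ = t * C₀ := by simp [mul_comm]
      _ ≤ C₀ := by nlinarith [ht.2]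
  -- Hölder estimate
  have hCS : C₀ ≤ Real.exp (-H₀/2) * uE := by
    have h1 : C₀ ≤ Real.sqrt T * Real.sqrt (∫ x in (0:ℝ)..T, |u'' x| ^ 2) :=
      aux_holder hT0 hu''
    have h2 : (∫ x in (0:ℝ)..T, |u'' x| ^ 2) ≤ Real.exp (-H₀) * B := by
      rw [hB, ← intervalIntegral.integral_const_mul]
      apply intervalIntegral.integral_mono_on hT0.le
      · exact hint (hu''.abs.pow 2)
      · exact hint (continuousOn_const.mul ((hexpH_cont.mul (hu''.abs.pow 2))))
      · intro x hx
        have hge : (1:ℝ) ≤ Real.exp (-H₀) * Real.exp (H x) := by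
          rw [← Real.exp_add]
          rw [← Real.exp_zero]
          apply Real.exp_le_exp.2
          have := hH₀.2 ⟨x, hx, rfl⟩
          linarith
        calc |u'' x| ^ 2 = 1 * |u'' x| ^ 2 := by ring
          _ ≤ (Real.exp (-H₀) * Real.exp (H x)) * |u'' x| ^ 2 :=
              mul_le_mul_of_nonneg_right hge (sq_nonneg _)
          _ = Real.exp (-H₀) * (Real.exp (H x) * |u'' x| ^ 2) := by ring
    have h3 : Real.sqrt (∫ x in (0:ℝ)..T, |u'' x| ^ 2) ≤ Real.exp (-H₀/2) * uE := by
      calc Real.sqrt (∫ x in (0:ℝ)..T, |u'' x| ^ 2) ≤ Real.sqrt (Real.exp (-H₀) * B) :=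
            Real.sqrt_le_sqrt h2
        _ = Real.exp (-H₀/2) * uE := by
            rw [Real.sqrt_mul (Real.exp_pos _).le, huE]
            congr 1
            rw [show Real.exp (-H₀) = Real.exp (-H₀/2) * Real.exp (-H₀/2) by
              rw [← Real.exp_add]; ring_nf]
            exact Real.sqrt_mul_self (Real.exp_pos _).le
    have h4 : Real.sqrt T ≤ 1 := by
      rw [show (1:ℝ) = Real.sqrt 1 by simp]
      exact Real.sqrt_le_sqrt hT1
    calc C₀ ≤ Real.sqrt T * Real.sqrt (∫ x in (0:ℝ)..T, |u'' x| ^ 2) := h1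
      _ ≤ 1 * (Real.exp (-H₀/2) * uE) := by
          apply mul_le_mul h4 h3 (Real.sqrt_nonneg _) zero_le_one
      _ = Real.exp (-H₀/2) * uE := by ring
  set K := Real.exp (-H₀/2) * uE with hK
  have hKnn : 0 ≤ K := mul_nonneg (Real.exp_pos _).le huE0
  have huK : ∀ t ∈ Icc (0:ℝ) T, |u t| ≤ K := fun t ht => (hule t ht).trans hCS
  have hθ₁0 : (0:ℝ) < θ₁ := by linarith
  have hθ₂0 : (0:ℝ) < θ₂ := by linarith
  have hKθ₁ : K ^ θ₁ ≤ estar * uE ^ θ₁ := by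
    rw [hK, Real.mul_rpow (Real.exp_pos _).le huE0]
    apply mul_le_mul_of_nonneg_right _ (Real.rpow_nonneg huE0 _)
    rw [Real.rpow_def_of_pos (Real.exp_pos _), Real.log_exp, hestar]
    refine le_trans ?_ (le_max_left _ _)
    exact Real.exp_le_exp.2 (le_of_eq (by ring))
  have hKθ₂ : K ^ θ₂ ≤ estar * uE ^ θ₂ := by
    rw [hK, Real.mul_rpow (Real.exp_pos _).le huE0]
    apply mul_le_mul_of_nonneg_right _ (Real.rpow_nonneg huE0 _)
    rw [Real.rpow_def_of_pos (Real.exp_pos _), Real.log_exp, hestar]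
    refine le_trans ?_ (le_max_right _ _)
    exact Real.exp_le_exp.2 (le_of_eq (by ring))
  have hKθ₁nn : (0:ℝ) ≤ K ^ θ₁ := Real.rpow_nonneg hKnn _
  constructor
  · -- first inequality
    have hterm : ∀ i ∈ Finset.range (N+1),
        (∫ x in (ss i)..(tt (i+1)), Real.exp (H x) * Ftilde i x (u x))
          ≤ M₁ * (A₁/θ₁) * K ^ θ₁ * (tt (i+1) - ss i) := by
      intro i hi
      rw [Finset.mem_range] at hi
      have hiN : i ≤ N := by omega
      have hab : ss i ≤ tt (i+1) := (hst i hiN).le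
      have hIcc := hsub i hiN
      have hintF : IntegrableOn (fun x => Real.exp (H x) * Ftilde i x (u x))
          (Ioc (ss i) (tt (i+1))) volume := by
        apply IntegrableOn.mono_set _ Ioc_subset_Icc_self
        apply ContinuousOn.integrableOn_Icc
        exact (hexpH_cont.mono hIcc).mul
          ((hFt_cont i hiN).comp_continuousOn (f := fun x => (x, u x))
            (continuousOn_id.prodMk (hu_cont.mono hIcc)))
      rw [intervalIntegral.integral_of_le hab]
      calc (∫ x in Ioc (ss i) (tt (i+1)), Real.exp (H x) * Ftilde i x (u x))
          ≤ ∫ _x in Ioc (ss i) (tt (i+1)), M₁ * (A₁/θ₁) * K ^ θ₁ := by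
            apply setIntegral_mono_on hintF
              (integrableOn_const measure_Ioc_lt_top.ne) measurableSet_Ioc
            intro x hx
            have hxI : x ∈ Icc 0 T := hIcc (Ioc_subset_Icc_self hx)
            have h1 : Real.exp (H x) ≤ M₁ := hM₁.2 ⟨x, hxI, rfl⟩
            have h3 : |u x| ^ θ₁ ≤ K ^ θ₁ :=
              Real.rpow_le_rpow (abs_nonneg _) (huK x hxI) (by linarith)
            have h2 : Ftilde i x (u x) ≤ (A₁/θ₁) * K ^ θ₁ := by
              calc Ftilde i x (u x) ≤ |Ftilde i x (u x)| := le_abs_self _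
                _ ≤ (A₁/θ₁) * |u x| ^ θ₁ := hFt_bound i hiN x hx (u x)
                _ ≤ (A₁/θ₁) * K ^ θ₁ :=
                    mul_le_mul_of_nonneg_left h3 (by positivity)
            have hFnn : (0:ℝ) ≤ (A₁/θ₁) * K ^ θ₁ := by positivity
            calc Real.exp (H x) * Ftilde i x (u x)
                ≤ Real.exp (H x) * ((A₁/θ₁) * K ^ θ₁) :=
                  mul_le_mul_of_nonneg_left h2 (Real.exp_pos _).le
              _ ≤ M₁ * ((A₁/θ₁) * K ^ θ₁) := mul_le_mul_of_nonneg_right h1 hFnn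
              _ = M₁ * (A₁/θ₁) * K ^ θ₁ := by ring
        _ = M₁ * (A₁/θ₁) * K ^ θ₁ * (tt (i+1) - ss i) := by
            rw [setIntegral_const, Real.volume_real_Ioc_of_le hab,
              smul_eq_mul, mul_comm]
    calc (∑ i ∈ Finset.range (N + 1),
          ∫ x in (ss i)..(tt (i + 1)), Real.exp (H x) * Ftilde i x (u x))
        ≤ ∑ i ∈ Finset.range (N+1), M₁ * (A₁/θ₁) * K ^ θ₁ * (tt (i+1) - ss i) :=
          Finset.sum_le_sum hterm
      _ = M₁ * (A₁/θ₁) * K ^ θ₁ * ∑ i ∈ Finset.range (N+1), (tt (i+1) - ss i) := by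
          rw [← Finset.mul_sum]
      _ ≤ M₁ * (A₁/θ₁) * K ^ θ₁ * T := by
          apply mul_le_mul_of_nonneg_left _ (by positivity)
          have hlen : ∀ n, n ≤ N →
              (∑ i ∈ Finset.range (n+1), (tt (i+1) - ss i)) ≤ tt (n+1) - ss 0 := by
            intro n hn
            induction n with
            | zero => simp
            | succ m ih =>
              rw [Finset.sum_range_succ]
              have h1 := ih (by omega)
              have h2 : tt (m+1) < ss (m+1) := hts (m+1) (by omega) (by omega)
              linarith
          have := hlen N le_rfl
          rw [htN, hs0] at this
          linarith
      _ ≤ M₁ * A₁ * T * estar * uE ^ θ₁ := by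
          have h5 : A₁/θ₁ ≤ A₁ := div_le_self hA₁.le hθ₁.le
          have h7 : M₁ * (A₁/θ₁) ≤ M₁ * A₁ := mul_le_mul_of_nonneg_left h5 hM₁pos.le
          have h8 : M₁ * (A₁/θ₁) * K ^ θ₁ ≤ M₁ * A₁ * (estar * uE ^ θ₁) :=
            mul_le_mul h7 hKθ₁ hKθ₁nn (mul_nonneg hM₁pos.le hA₁.le)
          calc M₁ * (A₁/θ₁) * K ^ θ₁ * T ≤ M₁ * A₁ * (estar * uE ^ θ₁) * T :=
                mul_le_mul_of_nonneg_right h8 hT0.le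
            _ = M₁ * A₁ * T * estar * uE ^ θ₁ := by ring
  · -- second inequality
    have hterm : ∀ i ∈ Finset.Icc 1 N,
        (∫ s in (0:ℝ)..(u (tt i)), Real.exp (H (tt i)) * Itilde i s)
          ≤ M₁ * a₂ * ((θ₂+1)/θ₂) * estar * (uE ^ θ₂ + 1) := by
      intro i hi
      rw [Finset.mem_Icc] at hi
      obtain ⟨hi1, hiN⟩ := hi
      have htti : tt i ∈ Icc (0:ℝ) T := by
        have h1 : ss (i-1) < tt i := by
          have := hst (i-1) (by omega)
          rwa [Nat.sub_add_cancel hi1] at this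
        have h2 : 0 ≤ ss (i-1) := hssnn (i-1) (by omega)
        have h3 : tt i < ss i := hts i hi1 hiN
        have h4 : ss i < tt (i+1) := hst i hiN
        have h5 : tt (i+1) ≤ T := httT i hiN
        exact ⟨by linarith, by linarith⟩
      have hc1 : Real.exp (H (tt i)) ≤ M₁ := hM₁.2 ⟨tt i, htti, rfl⟩
      have hg : Continuous (fun s => Real.exp (H (tt i)) * Itilde i s) :=
        continuous_const.mul (hIt_cont i hi1 hiN)
      have hgb : ∀ s, |Real.exp (H (tt i)) * Itilde i s|
          ≤ (M₁ * a₂) * (|s| ^ (θ₂-1) + 1) := by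
        intro s
        rw [abs_mul, abs_of_pos (Real.exp_pos _)]
        calc Real.exp (H (tt i)) * |Itilde i s|
            ≤ M₁ * (a₂ * (|s| ^ (θ₂-1) + 1)) := by
              apply mul_le_mul hc1 (hIt_bound i hi1 hiN s) (abs_nonneg _) hM₁pos.le
          _ = (M₁ * a₂) * (|s| ^ (θ₂-1) + 1) := by ring
      have key := aux_int hθ₂ hg hgb (u (tt i))
      have hv : |u (tt i)| ≤ K := huK _ htti
      have hvθ : |u (tt i)| ^ θ₂ ≤ K ^ θ₂ :=
        Real.rpow_le_rpow (abs_nonneg _) hv (by linarith)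
      have hK1 : K ≤ K ^ θ₂ + 1 := by
        rcases le_or_gt K 1 with hk | hk
        · have : (0:ℝ) ≤ K ^ θ₂ := Real.rpow_nonneg hKnn _
          linarith
        · have h6 : K ^ (1:ℝ) ≤ K ^ θ₂ :=
            Real.rpow_le_rpow_of_exponent_le hk.le (by linarith)
          rw [Real.rpow_one] at h6
          linarith
      have huEθ : (0:ℝ) ≤ uE ^ θ₂ := Real.rpow_nonneg huE0 _
      have hEe : estar * uE ^ θ₂ + estar = estar * (uE ^ θ₂ + 1) := by ring
      have e1 : |u (tt i)| ^ θ₂ ≤ estar * (uE ^ θ₂ + 1) := by linarith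
      have e2 : |u (tt i)| ≤ estar * (uE ^ θ₂ + 1) := by linarith
      have h9 : |u (tt i)| ^ θ₂ / θ₂ + |u (tt i)|
          ≤ ((θ₂+1)/θ₂) * (estar * (uE ^ θ₂ + 1)) := by
        have h10 : |u (tt i)| ^ θ₂ / θ₂ ≤ (estar * (uE ^ θ₂ + 1)) / θ₂ :=
          (div_le_div_iff_of_pos_right hθ₂0).2 e1
        have h11 : (estar * (uE ^ θ₂ + 1)) / θ₂ + (estar * (uE ^ θ₂ + 1))
            = ((θ₂+1)/θ₂) * (estar * (uE ^ θ₂ + 1)) := by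
          field_simp
          ring
        linarith
      calc (∫ s in (0:ℝ)..(u (tt i)), Real.exp (H (tt i)) * Itilde i s)
          ≤ (M₁ * a₂) * (|u (tt i)| ^ θ₂ / θ₂ + |u (tt i)|) := key
        _ ≤ (M₁ * a₂) * (((θ₂+1)/θ₂) * (estar * (uE ^ θ₂ + 1))) :=
            mul_le_mul_of_nonneg_left h9 (mul_nonneg hM₁pos.le ha₂.le)
        _ = M₁ * a₂ * ((θ₂+1)/θ₂) * estar * (uE ^ θ₂ + 1) := by ring
    calc (∑ i ∈ Finset.Icc 1 N,
          ∫ s in (0:ℝ)..(u (tt i)), Real.exp (H (tt i)) * Itilde i s)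
        ≤ ∑ _i ∈ Finset.Icc 1 N, M₁ * a₂ * ((θ₂+1)/θ₂) * estar * (uE ^ θ₂ + 1) :=
          Finset.sum_le_sum hterm
      _ = (N:ℝ) * (M₁ * a₂ * ((θ₂+1)/θ₂) * estar * (uE ^ θ₂ + 1)) := by
          rw [Finset.sum_const, Nat.card_Icc, nsmul_eq_mul]
          norm_num
      _ = (N:ℝ) * M₁ * a₂ * ((θ₂+1)/θ₂) * estar * (uE ^ θ₂ + 1) := by ring
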